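/- arXiv:2311.00973 — 2 statements merged into one kernel-verified Lean document; each statement's English description precedes it below -/
import Mathlib

section
/- Let X_1, ..., X_n be vectors in ℝ^d with ‖X_t‖_2 ≤ L for all t, and let V be a d×d positive definite real matrix whose smallest eigenvalue satisfies λ_min(V) ≥ max(1, L²). Define V̄_t = V + ∑_{s=1}^t X_s X_sᵀ for 0 ≤ t ≤ n. Then ∑_{t=1}^n ‖X_t‖²_{V̄_{t-1}^{-1}} ≤ 2 log(det(V̄_n) / det(V)). -/
open Matrix Finset

/-- The weighted norm `‖x‖_A = √(xᵀ A x)`. -/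
noncomputable def quadNorm {d : ℕ} (A : Matrix (Fin d) (Fin d) ℝ) (x : Fin d → ℝ) : ℝ :=
  Real.sqrt (x ⬝ᵥ A *ᵥ x)

/-- The Euclidean (ℓ₂) norm of a vector in ℝ^d. -/
noncomputable def l2norm {d : ℕ} (x : Fin d → ℝ) : ℝ :=
  Real.sqrt (∑ i, x i ^ 2)

lemma outer_posSemidef {d : ℕ} (x : Fin d → ℝ) : (vecMulVec x x).PosSemidef := by
  rw [vecMulVec_eq (Fin 1), show Matrix.replicateCol (Fin 1) x = (Matrix.replicateRow (Fin 1) x)ᴴ by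
    rw [Matrix.conjTranspose_replicateRow]; simp]
  exact posSemidef_conjTranspose_mul_self _

lemma quad_lower {d : ℕ} {V : Matrix (Fin d) (Fin d) ℝ} (hV : V.PosDef) {c : ℝ}
    (hEig : ∀ i, c ≤ hV.1.eigenvalues i) (y : Fin d → ℝ) :
    c * (y ⬝ᵥ y) ≤ y ⬝ᵥ V *ᵥ y := by
  set U : Matrix (Fin d) (Fin d) ℝ := (hV.1.eigenvectorUnitary : Matrix (Fin d) (Fin d) ℝ) with hU
  have hUU : U * star U = 1 := Matrix.mem_unitaryGroup_iff.mp (hV.1.eigenvectorUnitary).2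
  have key : V - c • (1 : Matrix (Fin d) (Fin d) ℝ) =
      U * diagonal (fun i => hV.1.eigenvalues i - c) * Uᴴ := by
    have h1 := hV.1.spectral_theorem
    rw [← Matrix.star_eq_conjTranspose]
    have hdiag : diagonal (fun i => hV.1.eigenvalues i - c) =
        diagonal (RCLike.ofReal ∘ hV.1.eigenvalues) - c • (1 : Matrix (Fin d) (Fin d) ℝ) := by
      rw [smul_one_eq_diagonal, ← diagonal_sub]
      congr 1
    rw [Unitary.conjStarAlgAut_apply, ← hU] at h1
    rw [hdiag, Matrix.mul_sub, Matrix.sub_mul, ← h1]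
    congr 1
    rw [Matrix.mul_smul, Matrix.mul_one, Matrix.smul_mul, hUU]
  have hPSD : (V - c • (1 : Matrix (Fin d) (Fin d) ℝ)).PosSemidef := by
    rw [key]
    exact (posSemidef_diagonal_iff.mpr fun i => sub_nonneg.2 (hEig i)).mul_mul_conjTranspose_same U
  have h2 := hPSD.dotProduct_mulVec_nonneg y
  rw [star_trivial, Matrix.sub_mulVec, dotProduct_sub, Matrix.smul_mulVec,
    Matrix.one_mulVec, dotProduct_smul] at h2
  simp only [smul_eq_mul] at h2
  linarith

lemma log_ineq {u : ℝ} (h0 : 0 ≤ u) (h1 : u ≤ 1) : u ≤ 2 * Real.log (1 + u) := by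
  have hpos : (0:ℝ) < 1 + u := by linarith
  have : u / 2 ≤ Real.log (1 + u) := by
    rw [Real.le_log_iff_exp_le hpos]
    have h2 := Real.add_one_le_exp (-(u / 2))
    have h3 : Real.exp (u / 2) * Real.exp (-(u / 2)) = 1 := by
      rw [← Real.exp_add]; simp
    nlinarith [Real.exp_pos (u / 2), Real.exp_pos (-(u / 2))]
  linarith

/-- Elliptical potential lemma (Lemma 11 in Abbasi-Yadkori et al., third part):
if `λ_min(V) ≥ max(1, L²)` then `∑_{t=1}^n ‖X_t‖²_{V̄_{t-1}⁻¹} ≤ 2 log(det(V̄_n)/det V)`. -/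
theorem stmt2 {d : ℕ} (n : ℕ) (L : ℝ) (X : ℕ → Fin d → ℝ)
    (hX : ∀ t < n, l2norm (X t) ≤ L)
    (V : Matrix (Fin d) (Fin d) ℝ) (hV : V.PosDef)
    (hEig : ∀ i, max 1 (L ^ 2) ≤ hV.1.eigenvalues i)
    (Vbar : ℕ → Matrix (Fin d) (Fin d) ℝ)
    (hVbar : ∀ t, Vbar t = V + ∑ s ∈ Finset.range t, vecMulVec (X s) (X s)) :
    ∑ t ∈ Finset.range n, (quadNorm ((Vbar t)⁻¹) (X t)) ^ 2 ≤
      2 * Real.log ((Vbar n).det / V.det) := by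
  set u : ℕ → ℝ := fun t => X t ⬝ᵥ (Vbar t)⁻¹ *ᵥ X t with hu
  have hsum : ∀ t, (∑ s ∈ Finset.range t, vecMulVec (X s) (X s)).PosSemidef := fun t =>
    Finset.sum_induction _ _ (fun a b ha hb => ha.add hb) (Matrix.PosSemidef.zero)
      (fun s _ => outer_posSemidef (X s))
  have hPos : ∀ t, (Vbar t).PosDef := fun t => by
    rw [hVbar t]; exact hV.add_posSemidef (hsum t)
  have hu0 : ∀ t, 0 ≤ u t := fun t => by
    have := ((hPos t).inv).posSemidef.dotProduct_mulVec_nonneg (X t)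
    rwa [star_trivial] at this
  have hu1 : ∀ t < n, u t ≤ 1 := by
    intro t ht
    have hL0 : 0 ≤ L := le_trans (Real.sqrt_nonneg _) (hX t ht)
    have hSnn : 0 ≤ ∑ i, X t i ^ 2 := Finset.sum_nonneg fun i _ => sq_nonneg _
    have hx2 : ∑ i, X t i ^ 2 ≤ L ^ 2 := by
      have h := hX t ht
      rw [l2norm] at h
      nlinarith [Real.sq_sqrt hSnn, Real.sqrt_nonneg (∑ i, X t i ^ 2)]
    set y := (Vbar t)⁻¹ *ᵥ X t with hy
    have hAy : (Vbar t) *ᵥ y = X t := by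
      rw [hy, Matrix.mulVec_mulVec, Matrix.mul_nonsing_inv _ (hPos t).det_pos.ne'.isUnit,
        Matrix.one_mulVec]
    have hyAy : y ⬝ᵥ (Vbar t) *ᵥ y = u t := by
      rw [hAy, dotProduct_comm]
    have hynn : (0:ℝ) ≤ y ⬝ᵥ y := by
      simp only [dotProduct]
      exact Finset.sum_nonneg fun i _ => mul_self_nonneg _
    have hlow : max 1 (L ^ 2) * (y ⬝ᵥ y) ≤ u t := by
      rw [← hyAy, hVbar t, Matrix.add_mulVec, dotProduct_add]
      have h1 := quad_lower hV hEig y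
      have h2 := (hsum t).dotProduct_mulVec_nonneg y
      rw [star_trivial] at h2
      linarith
    have hCS : (u t) ^ 2 ≤ L ^ 2 * (y ⬝ᵥ y) := by
      have hcs := Finset.sum_mul_sq_le_sq_mul_sq Finset.univ (X t) y
      have hue : u t = ∑ i, X t i * y i := rfl
      have hyy : y ⬝ᵥ y = ∑ i, y i ^ 2 := by simp [dotProduct, sq]
      rw [hue, hyy]
      calc (∑ i, X t i * y i) ^ 2 ≤ (∑ i, X t i ^ 2) * ∑ i, y i ^ 2 := hcs
        _ ≤ L ^ 2 * ∑ i, y i ^ 2 := by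
            apply mul_le_mul_of_nonneg_right hx2
            exact Finset.sum_nonneg fun i _ => sq_nonneg _
    have hc1 : (1:ℝ) ≤ max 1 (L ^ 2) := le_max_left _ _
    have hcL : L ^ 2 ≤ max 1 (L ^ 2) := le_max_right _ _
    nlinarith [hu0 t, mul_le_mul_of_nonneg_right hcL hynn]
  have hdet : ∀ t, (Vbar (t + 1)).det = (Vbar t).det * (1 + u t) := by
    intro t
    have hstep : Vbar (t + 1) = Vbar t + vecMulVec (X t) (X t) := by
      rw [hVbar, hVbar, Finset.sum_range_succ, add_assoc]
    rw [hstep, vecMulVec_eq (Fin 1),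
      Matrix.det_add_replicateCol_mul_replicateRow (hPos t).det_pos.ne'.isUnit]
    congr 1
    have hinst : (fun a b => decidableEq_of_subsingleton a b : DecidableEq (Fin 1)) =
        instDecidableEqFin 1 := Subsingleton.elim _ _
    rw [hinst, Matrix.det_unique, ← Matrix.replicateRow_vecMul]
    simp [hu, Matrix.add_apply, Matrix.one_apply_eq, Matrix.replicateRow_mul_replicateCol_apply,
      ← Matrix.dotProduct_mulVec]
  have hdetpos : ∀ t, 0 < (Vbar t).det := fun t => (hPos t).det_pos
  have hV0 : Vbar 0 = V := by rw [hVbar]; simp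
  have hlogdet : ∀ m, Real.log ((Vbar m).det) =
      Real.log (V.det) + ∑ t ∈ Finset.range m, Real.log (1 + u t) := by
    intro m
    induction m with
    | zero => simp [hV0]
    | succ k ih =>
        rw [Finset.sum_range_succ, hdet k,
          Real.log_mul (hdetpos k).ne' (show (0:ℝ) < 1 + u k by linarith [hu0 k]).ne', ih]
        ring
  calc ∑ t ∈ Finset.range n, (quadNorm ((Vbar t)⁻¹) (X t)) ^ 2
      = ∑ t ∈ Finset.range n, u t := by
        refine Finset.sum_congr rfl fun t _ => ?_
        rw [quadNorm, Real.sq_sqrt (hu0 t)]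
    _ ≤ ∑ t ∈ Finset.range n, 2 * Real.log (1 + u t) :=
        Finset.sum_le_sum fun t ht => log_ineq (hu0 t) (hu1 t (Finset.mem_range.mp ht))
    _ = 2 * (Real.log ((Vbar n).det) - Real.log (V.det)) := by
        rw [← Finset.mul_sum, hlogdet n]; ring
    _ = 2 * Real.log ((Vbar n).det / V.det) := by
        rw [Real.log_div (hdetpos n).ne' hV.det_pos.ne']
end

section
/- Let {σ_t}_{t≥1} and {β_t}_{t≥1} be sequences of non-negative real numbers with {β_t} non-decreasing, let ρ, γ > 0, and let {x_t}_{t≥1} ⊂ ℝ^d with ‖x_t‖_2 ≤ 1 for all t. Define recursively Z_1 = I, σ̄_t = max{ σ_t, ρ, γ · ‖x_t‖_{Z_t^{-1}}^{1/2} }, and Z_{t+1} = Z_t + x_t x_tᵀ / σ̄_t² for all t ≥ 1. Let ι = log(1 + T/(d ρ²)). Then for every T ≥ 1: ∑_{t=1}^T min{ 1, β_t ‖x_t‖_{Z_t^{-1}} } ≤ 2 d ι + 2 β_T γ² d ι + 2 √(d ι) · √( ∑_{t=1}^T β_t² (σ_t² + ρ²) ). -/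
open Matrix Finset

lemma min_le_two_log {u : ℝ} (hu : 0 ≤ u) : min 1 u ≤ 2 * Real.log (1 + u) := by
  have hlb : u / (1 + u) ≤ Real.log (1 + u) := by
    have h1 : (0:ℝ) < 1 + u := by linarith
    have := Real.log_le_sub_one_of_pos (x := 1 / (1 + u)) (by positivity)
    rw [Real.log_div one_ne_zero (ne_of_gt h1), Real.log_one] at this
    have h2 : 1 / (1 + u) - 1 = -(u / (1+u)) := by field_simp; ring
    linarith [this, h2 ▸ this]
  rcases le_total u 1 with h | h
  · have h1 : (0:ℝ) < 1 + u := by linarith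
    have : u ≤ 2 * (u / (1 + u)) := by
      rw [mul_div_assoc', le_div_iff₀ h1]
      nlinarith
    calc min 1 u ≤ u := min_le_right _ _
      _ ≤ 2 * (u / (1+u)) := this
      _ ≤ 2 * Real.log (1+u) := by linarith
  · have : Real.log 2 ≤ Real.log (1 + u) :=
      Real.log_le_log (by norm_num) (by linarith)
    have h2 : (0.6931471803 : ℝ) < Real.log 2 := Real.log_two_gt_d9
    calc min 1 u ≤ 1 := min_le_left _ _
      _ ≤ 2 * Real.log (1 + u) := by nlinarith

lemma psd_smul_vecMulVec {d : ℕ} {c : ℝ} (hc : 0 ≤ c) (v : Fin d → ℝ) :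
    (c • vecMulVec v v).PosSemidef := by
  have h : c • vecMulVec v v
      = replicateCol (Fin 1) (Real.sqrt c • v) * (replicateCol (Fin 1) (Real.sqrt c • v))ᴴ := by
    rw [conjTranspose_replicateCol, star_trivial]; erw [← vecMulVec_eq (Fin 1)]
    ext i j
    simp only [Matrix.smul_apply, vecMulVec_apply, Pi.smul_apply, smul_eq_mul]
    linear_combination (v i * v j) * (Real.mul_self_sqrt hc).symm
  rw [h]
  exact posSemidef_self_mul_conjTranspose _

lemma trace_eq_sum_eigs {d : ℕ} {A : Matrix (Fin d) (Fin d) ℝ} (hA : A.IsHermitian) :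
    A.trace = ∑ i, hA.eigenvalues i := by
  nth_rewrite 1 [hA.spectral_theorem]
  rw [Unitary.conjStarAlgAut_apply, trace_mul_cycle,
    (Matrix.mem_unitaryGroup_iff').mp hA.eigenvectorUnitary.2, one_mul, trace_diagonal]
  simp

lemma det_le_trace_div_pow {d : ℕ} (hd : 0 < d) {A : Matrix (Fin d) (Fin d) ℝ}
    (hA : A.PosSemidef) : A.det ≤ (A.trace / d) ^ d := by
  have hdet : A.det = ∏ i, hA.1.eigenvalues i := by
    rw [hA.1.det_eq_prod_eigenvalues]; simp
  have htr : A.trace = ∑ i, hA.1.eigenvalues i := trace_eq_sum_eigs hA.1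
  have hnn : ∀ i, 0 ≤ hA.1.eigenvalues i := hA.eigenvalues_nonneg
  have hgm : ∏ i, (hA.1.eigenvalues i) ^ ((d:ℝ)⁻¹) ≤ ∑ i, (d:ℝ)⁻¹ * hA.1.eigenvalues i := by
    apply Real.geom_mean_le_arith_mean_weighted
    · intro i _; positivity
    · simp [Finset.card_univ]
      rw [mul_inv_cancel₀]
      exact_mod_cast hd.ne'
    · intro i _; exact hnn i
  have hprod : (∏ i, (hA.1.eigenvalues i) ^ ((d:ℝ)⁻¹)) ^ d = ∏ i, hA.1.eigenvalues i := by
    rw [← Finset.prod_pow]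
    congr 1; ext i
    rw [← Real.rpow_natCast ((hA.1.eigenvalues i) ^ ((d:ℝ)⁻¹)) d, ← Real.rpow_mul (hnn i),
      inv_mul_cancel₀ (by exact_mod_cast hd.ne'), Real.rpow_one]
  calc A.det = (∏ i, (hA.1.eigenvalues i) ^ ((d:ℝ)⁻¹)) ^ d := by rw [hprod, hdet]
    _ ≤ (∑ i, (d:ℝ)⁻¹ * hA.1.eigenvalues i) ^ d := by
        apply pow_le_pow_left₀ _ hgm
        exact Finset.prod_nonneg fun i _ => Real.rpow_nonneg (hnn i) _
    _ = (A.trace / d) ^ d := by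
        rw [htr, ← Finset.mul_sum, div_eq_inv_mul]

set_option maxHeartbeats 1000000 in
/-- Weighted elliptical potential lemma (Lemma B.1 in Zhou & Gu): with
`Z_1 = I`, `σ̄_t = max{σ_t, ρ, γ‖x_t‖_{Z_t⁻¹}^{1/2}}`, `Z_{t+1} = Z_t + x_t x_tᵀ/σ̄_t²`,
and `ι = log(1 + T/(dρ²))`, it holds for every `T ≥ 1` that
`∑_{t=1}^T min{1, β_t ‖x_t‖_{Z_t⁻¹}} ≤ 2dι + 2β_T γ² dι + 2√(dι) √(∑_t β_t²(σ_t² + ρ²))`. -/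
theorem stmt13 {d : ℕ} (σ β : ℕ → ℝ) (hσ : ∀ t, 0 ≤ σ t) (hβ : ∀ t, 0 ≤ β t)
    (hβmono : Monotone β) (ρ γ : ℝ) (hρ : 0 < ρ) (hγ : 0 < γ)
    (x : ℕ → Fin d → ℝ) (hx : ∀ t, l2norm (x t) ≤ 1)
    (Z : ℕ → Matrix (Fin d) (Fin d) ℝ) (σbar : ℕ → ℝ)
    (hZ1 : Z 1 = 1)
    (hσbar : ∀ t, 1 ≤ t →
      σbar t = max (σ t) (max ρ (γ * Real.sqrt (quadNorm ((Z t)⁻¹) (x t)))))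
    (hZrec : ∀ t, 1 ≤ t → Z (t + 1) = Z t + (1 / σbar t ^ 2) • vecMulVec (x t) (x t)) :
    ∀ T : ℕ, 1 ≤ T →
      ∑ t ∈ Finset.Icc 1 T, min 1 (β t * quadNorm ((Z t)⁻¹) (x t)) ≤
        2 * d * Real.log (1 + (T : ℝ) / (d * ρ ^ 2)) +
          2 * β T * γ ^ 2 * d * Real.log (1 + (T : ℝ) / (d * ρ ^ 2)) +
          2 * Real.sqrt (d * Real.log (1 + (T : ℝ) / (d * ρ ^ 2))) *
            Real.sqrt (∑ t ∈ Finset.Icc 1 T, β t ^ 2 * (σ t ^ 2 + ρ ^ 2)) := by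
  rcases Nat.eq_zero_or_pos d with hdz | hd0
  · subst hdz
    intro T hT
    have hL : ∀ t ∈ Finset.Icc 1 T, min 1 (β t * quadNorm ((Z t)⁻¹) (x t)) = 0 := by
      intro t _
      have h0 : quadNorm ((Z t)⁻¹) (x t) = 0 := by
        simp [quadNorm, dotProduct]
      rw [h0, mul_zero]
      exact min_eq_right zero_le_one
    rw [Finset.sum_eq_zero hL]
    norm_num
  obtain ⟨w, hwdef⟩ : ∃ w : ℕ → ℝ, ∀ t, w t = quadNorm ((Z t)⁻¹) (x t) := ⟨_, fun _ => rfl⟩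
  obtain ⟨q, hqdef⟩ : ∃ q : ℕ → ℝ, ∀ t, q t = x t ⬝ᵥ (Z t)⁻¹ *ᵥ x t := ⟨_, fun _ => rfl⟩
  obtain ⟨u, hudef⟩ : ∃ u : ℕ → ℝ, ∀ t, u t = q t / σbar t ^ 2 := ⟨_, fun _ => rfl⟩
  have hdn0 : (d:ℝ) ≠ 0 := Nat.cast_ne_zero.mpr hd0.ne'
  have hσbar' : ∀ t, 1 ≤ t → σbar t = max (σ t) (max ρ (γ * Real.sqrt (w t))) := by
    intro t ht
    rw [hwdef]
    exact hσbar t ht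
  -- basic facts
  have hσρ : ∀ t, 1 ≤ t → ρ ≤ σbar t := fun t ht => by
    rw [hσbar' t ht]; exact le_max_of_le_right (le_max_left _ _)
  have hσ0 : ∀ t, 1 ≤ t → 0 < σbar t := fun t ht => lt_of_lt_of_le hρ (hσρ t ht)
  have hpd : ∀ t, 1 ≤ t → (Z t).PosDef := by
    intro t ht
    induction t, ht using Nat.le_induction with
    | base => rw [hZ1]; exact Matrix.PosDef.one
    | succ n hn ih =>
      rw [hZrec n hn]
      exact ih.add_posSemidef (psd_smul_vecMulVec (by positivity) (x n))
  have hq0 : ∀ t, 1 ≤ t → 0 ≤ q t := fun t ht => by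
    rw [hqdef]
    simpa using ((hpd t ht).posSemidef.inv).dotProduct_mulVec_nonneg (x t)
  have hw0 : ∀ t, 0 ≤ w t := fun t => by rw [hwdef]; exact Real.sqrt_nonneg _
  have hw2 : ∀ t, 1 ≤ t → w t ^ 2 = q t := fun t ht => by
    rw [hwdef, hqdef, quadNorm]
    exact Real.sq_sqrt (by rw [← hqdef]; exact hq0 t ht)
  have hu0 : ∀ t, 1 ≤ t → 0 ≤ u t := fun t ht => by
    rw [hudef]
    exact div_nonneg (hq0 t ht) (sq_nonneg _)
  have hσγ : ∀ t, 1 ≤ t → γ ^ 2 * w t ≤ σbar t ^ 2 := fun t ht => by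
    have h1 : γ * Real.sqrt (w t) ≤ σbar t := by
      rw [hσbar' t ht]; exact le_max_of_le_right (le_max_right _ _)
    have h2 : (γ * Real.sqrt (w t)) ^ 2 = γ ^ 2 * w t := by
      rw [mul_pow, Real.sq_sqrt (hw0 t)]
    calc γ ^ 2 * w t = (γ * Real.sqrt (w t)) ^ 2 := h2.symm
      _ ≤ σbar t ^ 2 := pow_le_pow_left₀ (mul_nonneg hγ.le (Real.sqrt_nonneg _)) h1 2
  -- determinant recursion
  have hdet : ∀ t, 1 ≤ t → (Z (t + 1)).det = (Z t).det * (1 + u t) := by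
    intro t ht
    have hvv : (1 / σbar t ^ 2) • vecMulVec (x t) (x t)
        = replicateCol (Fin 1) ((1 / σbar t ^ 2) • x t) * replicateRow (Fin 1) (x t) := by
      erw [← vecMulVec_eq (Fin 1)]
      ext i j
      simp [vecMulVec_apply]
      ring
    rw [hZrec t ht, hvv]; erw [det_add_replicateCol_mul_replicateRow (isUnit_iff_ne_zero.mpr (hpd t ht).det_pos.ne')]
    congr 1
    rw [Subsingleton.elim (fun (a b : Fin 1) => decidableEq_of_subsingleton a b)
      (instDecidableEqFin 1)]
    erw [det_fin_one]; rw [Matrix.add_apply, Matrix.one_apply_eq, Matrix.mul_assoc, ← replicateCol_mulVec,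
      replicateRow_mul_replicateCol_apply, mulVec_smul, dotProduct_smul]
    rw [hudef t, hqdef t]
    simp only [smul_eq_mul]
    ring
  -- trace recursion
  have htrstep : ∀ t, 1 ≤ t →
      (Z (t + 1)).trace = (Z t).trace + (1 / σbar t ^ 2) * ∑ i, x t i ^ 2 := by
    intro t ht
    rw [hZrec t ht, trace_add, trace_smul]
    congr 1
    simp [Matrix.trace, Matrix.diag, vecMulVec_apply, pow_two, Finset.mul_sum]
  have hxsum : ∀ t, ∑ i, x t i ^ 2 ≤ 1 := by
    intro t
    have h1 : Real.sqrt (∑ i, x t i ^ 2) ≤ 1 := hx t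
    have h2 : (0:ℝ) ≤ ∑ i, x t i ^ 2 := Finset.sum_nonneg fun i _ => sq_nonneg _
    nlinarith [Real.sq_sqrt h2, Real.sqrt_nonneg (∑ i, x t i ^ 2)]
  have htr : ∀ n : ℕ, (Z (n + 1)).trace ≤ d + n / ρ ^ 2 := by
    intro n
    induction n with
    | zero => simp [hZ1, Matrix.trace_one]
    | succ n ih =>
      rw [htrstep (n + 1) (Nat.le_add_left 1 n)]
      have hc : 1 / σbar (n + 1) ^ 2 ≤ 1 / ρ ^ 2 := by
        have h4 := hσρ (n + 1) (Nat.le_add_left 1 n)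
        have h5 := hσ0 (n + 1) (Nat.le_add_left 1 n)
        apply one_div_le_one_div_of_le (by positivity)
        nlinarith
      have h2 : (1 / σbar (n + 1) ^ 2) * ∑ i, x (n+1) i ^ 2 ≤ 1 / ρ ^ 2 := by
        have hs0 : (0:ℝ) ≤ ∑ i, x (n+1) i ^ 2 := Finset.sum_nonneg fun i _ => sq_nonneg _
        calc (1 / σbar (n + 1) ^ 2) * ∑ i, x (n+1) i ^ 2
            ≤ (1 / ρ ^ 2) * 1 := mul_le_mul hc (hxsum _) hs0 (by positivity)
          _ = 1 / ρ ^ 2 := mul_one _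
      push_cast
      have h6 : ((n:ℝ) + 1) / ρ ^ 2 = (n:ℝ) / ρ ^ 2 + 1 / ρ ^ 2 := by ring
      linarith
  have hdetprod : ∀ n : ℕ, (Z (n + 1)).det = ∏ t ∈ Icc 1 n, (1 + u t) := by
    intro n
    induction n with
    | zero => simp [hZ1]
    | succ n ih =>
      rw [Finset.prod_Icc_succ_top (Nat.le_add_left 1 n), ← ih,
        hdet (n + 1) (Nat.le_add_left 1 n)]
  -- specialize to T
  intro T hT
  set ι := Real.log (1 + (T : ℝ) / (d * ρ ^ 2)) with hιdef
  have hι0 : 0 ≤ ι := Real.log_nonneg (by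
    have : (0:ℝ) ≤ (T:ℝ) / (d * ρ ^ 2) := by positivity
    linarith)
  have hdetle : (Z (T + 1)).det ≤ (1 + (T : ℝ) / (d * ρ ^ 2)) ^ d := by
    have hps := (hpd (T + 1) (Nat.le_add_left 1 T)).posSemidef
    have htr0 : 0 ≤ (Z (T + 1)).trace := by
      rw [trace_eq_sum_eigs hps.1]
      exact Finset.sum_nonneg fun i _ => hps.eigenvalues_nonneg i
    have h1 : (Z (T + 1)).trace / d ≤ 1 + (T : ℝ) / (d * ρ ^ 2) := by
      have h2 := htr T
      have h3 : ((d : ℝ) + T / ρ ^ 2) / d = 1 + (T : ℝ) / (d * ρ ^ 2) := by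
        rw [add_div, div_self hdn0, div_div, mul_comm]
      rw [← h3]
      gcongr
    calc (Z (T + 1)).det ≤ ((Z (T + 1)).trace / d) ^ d := det_le_trace_div_pow hd0 hps
      _ ≤ (1 + (T : ℝ) / (d * ρ ^ 2)) ^ d := pow_le_pow_left₀ (by positivity) h1 d
  have hkey : ∑ t ∈ Icc 1 T, min 1 (u t) ≤ 2 * ((d:ℝ) * ι) := by
    have h1 : ∀ t ∈ Icc 1 T, min 1 (u t) ≤ 2 * Real.log (1 + u t) := fun t ht' =>
      min_le_two_log (hu0 t (Finset.mem_Icc.mp ht').1)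
    have h2 : ∀ t ∈ Icc 1 T, (1 : ℝ) + u t ≠ 0 := fun t ht' => by
      have := hu0 t (Finset.mem_Icc.mp ht').1; positivity
    calc ∑ t ∈ Icc 1 T, min 1 (u t) ≤ ∑ t ∈ Icc 1 T, 2 * Real.log (1 + u t) :=
          Finset.sum_le_sum h1
      _ = 2 * ∑ t ∈ Icc 1 T, Real.log (1 + u t) := by rw [Finset.mul_sum]
      _ = 2 * Real.log (∏ t ∈ Icc 1 T, (1 + u t)) := by rw [Real.log_prod h2]
      _ = 2 * Real.log ((Z (T + 1)).det) := by rw [hdetprod T]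
      _ ≤ 2 * ((d:ℝ) * ι) := by
          have h3 := Real.log_le_log (hpd (T + 1) (Nat.le_add_left 1 T)).det_pos hdetle
          rw [Real.log_pow] at h3
          linarith
  -- pointwise bound
  have hpt : ∀ t ∈ Icc 1 T, min 1 (β t * w t) ≤ (1 + β T * γ ^ 2) * min 1 (u t)
      + (β t * Real.sqrt (σ t ^ 2 + ρ ^ 2)) * Real.sqrt (min 1 (u t)) := by
    intro t ht'
    obtain ⟨ht1, htT⟩ := Finset.mem_Icc.mp ht'
    have hbt := hβ t
    have hbT := hβ T
    have hβle : β t ≤ β T := hβmono htT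
    have hm0 : 0 ≤ min 1 (u t) := le_min zero_le_one (hu0 t ht1)
    have hs0 : 0 < σbar t := hσ0 t ht1
    have huw : u t = w t ^ 2 / σbar t ^ 2 := by rw [hudef, hw2 t ht1]
    have hslack : 0 ≤ (β t * Real.sqrt (σ t ^ 2 + ρ ^ 2)) * Real.sqrt (min 1 (u t)) :=
      mul_nonneg (mul_nonneg (hβ t) (Real.sqrt_nonneg _)) (Real.sqrt_nonneg _)
    have hcoef : 0 ≤ 1 + β T * γ ^ 2 := by nlinarith [mul_nonneg (hβ T) (sq_nonneg γ)]
    rcases le_or_gt (σbar t) (w t) with hcase | hcase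
    · have h1le : 1 ≤ u t := by
        rw [huw, le_div_iff₀ (by positivity)]
        nlinarith
      have hm : min 1 (u t) = 1 := min_eq_left h1le
      have h5 : min 1 (β t * w t) ≤ 1 := min_le_left _ _
      nlinarith [mul_nonneg hbT (sq_nonneg γ)]
    · have hu1 : u t ≤ 1 := by
        rw [huw, div_le_one (by positivity)]
        nlinarith [hw0 t]
      have hm : min 1 (u t) = u t := min_eq_right hu1
      rcases le_or_gt (σbar t ^ 2) (γ ^ 2 * w t) with hg | hg
      · have heq : σbar t ^ 2 = γ ^ 2 * w t := le_antisymm hg (hσγ t ht1)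
        have hwne : w t ≠ 0 := by
          intro h0
          rw [h0, mul_zero] at heq
          nlinarith
        have huval : u t * γ ^ 2 = w t := by
          rw [huw, heq]
          field_simp
        have h5 : min 1 (β t * w t) ≤ β t * w t := min_le_right _ _
        nlinarith [hu0 t ht1, mul_nonneg (mul_nonneg hbt (sq_nonneg γ)) (hu0 t ht1),
          mul_nonneg (mul_nonneg (sub_nonneg.mpr hβle) (sq_nonneg γ)) (hu0 t ht1)]
      · have hc : γ * Real.sqrt (w t) < σbar t := by
          apply lt_of_pow_lt_pow_left₀ 2 hs0.le
          rw [mul_pow, Real.sq_sqrt (hw0 t)]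
          exact hg
        have h2 : σbar t ≤ max (σ t) ρ := by
          rcases le_total (γ * Real.sqrt (w t)) (max (σ t) ρ) with h | h
          · rw [hσbar' t ht1, ← max_assoc]
            exact max_le le_rfl h
          · exfalso
            have h6 : σbar t ≤ γ * Real.sqrt (w t) := by
              rw [hσbar' t ht1]
              exact max_le ((le_max_left _ _).trans h)
                (max_le ((le_max_right _ _).trans h) le_rfl)
            linarith
        have h3 : σbar t ^ 2 ≤ σ t ^ 2 + ρ ^ 2 := by
          rcases max_cases (σ t) ρ with ⟨he, _⟩ | ⟨he, _⟩ <;>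
            rw [he] at h2 <;> nlinarith [hσ t, hρ.le, hs0.le]
        have hsqu : Real.sqrt (u t) = w t / σbar t := by
          rw [huw, Real.sqrt_div (sq_nonneg (w t)), Real.sqrt_sq (hw0 t), Real.sqrt_sq hs0.le]
        have hσsqrt : σbar t ≤ Real.sqrt (σ t ^ 2 + ρ ^ 2) := by
          rw [show σbar t = Real.sqrt (σbar t ^ 2) from (Real.sqrt_sq hs0.le).symm]
          exact Real.sqrt_le_sqrt h3
        have hchain : min 1 (β t * w t) ≤
            (β t * Real.sqrt (σ t ^ 2 + ρ ^ 2)) * Real.sqrt (min 1 (u t)) := by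
          calc min 1 (β t * w t) ≤ β t * w t := min_le_right _ _
            _ = (β t * σbar t) * Real.sqrt (u t) := by
                rw [hsqu]
                field_simp
            _ ≤ (β t * Real.sqrt (σ t ^ 2 + ρ ^ 2)) * Real.sqrt (u t) :=
                mul_le_mul_of_nonneg_right (mul_le_mul_of_nonneg_left hσsqrt hbt)
                  (Real.sqrt_nonneg _)
            _ = (β t * Real.sqrt (σ t ^ 2 + ρ ^ 2)) * Real.sqrt (min 1 (u t)) := by rw [hm]
        have h7 : 0 ≤ (1 + β T * γ ^ 2) * min 1 (u t) := by positivity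
        linarith
  -- Cauchy-Schwarz part
  have hCS : ∑ t ∈ Icc 1 T, (β t * Real.sqrt (σ t ^ 2 + ρ ^ 2)) * Real.sqrt (min 1 (u t))
      ≤ Real.sqrt (∑ t ∈ Icc 1 T, β t ^ 2 * (σ t ^ 2 + ρ ^ 2)) * Real.sqrt (2 * ((d:ℝ) * ι)) := by
    have hcs2 := Finset.sum_mul_sq_le_sq_mul_sq (Icc 1 T)
      (fun t => β t * Real.sqrt (σ t ^ 2 + ρ ^ 2)) (fun t => Real.sqrt (min 1 (u t)))
    have ha2 : ∑ t ∈ Icc 1 T, (β t * Real.sqrt (σ t ^ 2 + ρ ^ 2)) ^ 2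
        = ∑ t ∈ Icc 1 T, β t ^ 2 * (σ t ^ 2 + ρ ^ 2) := by
      apply Finset.sum_congr rfl
      intro t _
      rw [mul_pow, Real.sq_sqrt (by positivity)]
    have hb2 : ∑ t ∈ Icc 1 T, (Real.sqrt (min 1 (u t))) ^ 2 = ∑ t ∈ Icc 1 T, min 1 (u t) := by
      apply Finset.sum_congr rfl
      intro t ht'
      exact Real.sq_sqrt (le_min zero_le_one (hu0 t (Finset.mem_Icc.mp ht').1))
    simp only [ha2, hb2] at hcs2
    have hs0 : (0:ℝ) ≤ ∑ t ∈ Icc 1 T, (β t * Real.sqrt (σ t ^ 2 + ρ ^ 2)) * Real.sqrt (min 1 (u t)) :=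
      Finset.sum_nonneg fun t _ =>
        mul_nonneg (mul_nonneg (hβ t) (Real.sqrt_nonneg _)) (Real.sqrt_nonneg _)
    have ha0 : (0:ℝ) ≤ ∑ t ∈ Icc 1 T, β t ^ 2 * (σ t ^ 2 + ρ ^ 2) :=
      Finset.sum_nonneg fun t _ => by positivity
    calc ∑ t ∈ Icc 1 T, (β t * Real.sqrt (σ t ^ 2 + ρ ^ 2)) * Real.sqrt (min 1 (u t))
        = Real.sqrt ((∑ t ∈ Icc 1 T, (β t * Real.sqrt (σ t ^ 2 + ρ ^ 2)) * Real.sqrt (min 1 (u t))) ^ 2) :=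
          (Real.sqrt_sq hs0).symm
      _ ≤ Real.sqrt ((∑ t ∈ Icc 1 T, β t ^ 2 * (σ t ^ 2 + ρ ^ 2)) * (2 * ((d:ℝ) * ι))) := by
          apply Real.sqrt_le_sqrt
          calc (∑ t ∈ Icc 1 T, (β t * Real.sqrt (σ t ^ 2 + ρ ^ 2)) * Real.sqrt (min 1 (u t))) ^ 2
              ≤ (∑ t ∈ Icc 1 T, β t ^ 2 * (σ t ^ 2 + ρ ^ 2)) * ∑ t ∈ Icc 1 T, min 1 (u t) := hcs2
            _ ≤ (∑ t ∈ Icc 1 T, β t ^ 2 * (σ t ^ 2 + ρ ^ 2)) * (2 * ((d:ℝ) * ι)) :=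
                mul_le_mul_of_nonneg_left hkey ha0
      _ = Real.sqrt (∑ t ∈ Icc 1 T, β t ^ 2 * (σ t ^ 2 + ρ ^ 2)) * Real.sqrt (2 * ((d:ℝ) * ι)) :=
          Real.sqrt_mul ha0 _
  -- final assembly
  have hsqrt2 : Real.sqrt (2 * ((d:ℝ) * ι)) ≤ 2 * Real.sqrt ((d:ℝ) * ι) := by
    rw [Real.sqrt_mul (by norm_num : (0:ℝ) ≤ 2)]
    have h2 : Real.sqrt 2 ≤ 2 := by
      nlinarith [Real.sq_sqrt (by norm_num : (0:ℝ) ≤ 2), Real.sqrt_nonneg 2]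
    exact mul_le_mul_of_nonneg_right h2 (Real.sqrt_nonneg _)
  have hB : Real.sqrt (∑ t ∈ Icc 1 T, β t ^ 2 * (σ t ^ 2 + ρ ^ 2)) * Real.sqrt (2 * ((d:ℝ) * ι))
      ≤ 2 * Real.sqrt ((d:ℝ) * ι) * Real.sqrt (∑ t ∈ Icc 1 T, β t ^ 2 * (σ t ^ 2 + ρ ^ 2)) := by
    have h8 := mul_le_mul_of_nonneg_left hsqrt2 (Real.sqrt_nonneg
      (∑ t ∈ Icc 1 T, β t ^ 2 * (σ t ^ 2 + ρ ^ 2)))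
    linarith
  have hmain : ∑ t ∈ Icc 1 T, min 1 (β t * w t)
      ≤ (1 + β T * γ ^ 2) * (2 * ((d:ℝ) * ι))
        + Real.sqrt (∑ t ∈ Icc 1 T, β t ^ 2 * (σ t ^ 2 + ρ ^ 2)) * Real.sqrt (2 * ((d:ℝ) * ι)) := by
    calc ∑ t ∈ Icc 1 T, min 1 (β t * w t)
        ≤ ∑ t ∈ Icc 1 T, ((1 + β T * γ ^ 2) * min 1 (u t)
            + (β t * Real.sqrt (σ t ^ 2 + ρ ^ 2)) * Real.sqrt (min 1 (u t))) :=
          Finset.sum_le_sum hpt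
      _ = (1 + β T * γ ^ 2) * ∑ t ∈ Icc 1 T, min 1 (u t)
            + ∑ t ∈ Icc 1 T, (β t * Real.sqrt (σ t ^ 2 + ρ ^ 2)) * Real.sqrt (min 1 (u t)) := by
          rw [Finset.sum_add_distrib, Finset.mul_sum]
      _ ≤ (1 + β T * γ ^ 2) * (2 * ((d:ℝ) * ι))
            + Real.sqrt (∑ t ∈ Icc 1 T, β t ^ 2 * (σ t ^ 2 + ρ ^ 2)) * Real.sqrt (2 * ((d:ℝ) * ι)) :=
          add_le_add (mul_le_mul_of_nonneg_left hkey
            (by nlinarith [mul_nonneg (hβ T) (sq_nonneg γ)])) hCS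
  have hrw : ∑ t ∈ Finset.Icc 1 T, min 1 (β t * quadNorm ((Z t)⁻¹) (x t))
      = ∑ t ∈ Icc 1 T, min 1 (β t * w t) := by
    apply Finset.sum_congr rfl
    intro t _
    rw [hwdef]
  rw [hrw]
  have hA : (1 + β T * γ ^ 2) * (2 * ((d:ℝ) * ι)) = 2 * d * ι + 2 * β T * γ ^ 2 * d * ι := by
    ring
  linarith
end
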